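/- Let H and K be complex inner product spaces with dim(H) ≥ 2, and let A : H → K be a non-zero additive mapping preserving Euclidean orthogonality. Then the following are equivalent: (a) A is neither complex-linear nor conjugate-linear; (b) there exists a non-zero x ∈ H such that i A(x) ∉ A(H); (c) for every non-zero x ∈ H, i A(x) ∉ A(H). -/

import Mathlib

open scoped ComplexInnerProductSpace

set_option linter.unusedSectionVars false
set_option linter.unusedVariables false
set_option maxHeartbeats 1000000

section AuxLemmas
variable {H K : Type*} [NormedAddCommGroup H] [InnerProductSpace ℂ H]
    [NormedAddCommGroup K] [InnerProductSpace ℂ K]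

private lemma inner_self_C {E : Type*} [NormedAddCommGroup E] [InnerProductSpace ℂ E] (x : E) :
    ⟪x, x⟫ = ((‖x‖ : ℝ) : ℂ) ^ 2 := by
  exact_mod_cast inner_self_eq_norm_sq_to_K x

private lemma aux_zero (A : H → K) (hadd : ∀ x y, A (x + y) = A x + A y) : A 0 = 0 := by
  have h := hadd 0 0
  rw [add_zero] at h
  exact (left_eq_add.mp h)

private lemma aux_neg (A : H → K) (hadd : ∀ x y, A (x + y) = A x + A y) (x : H) :
    A (-x) = - A x := by
  have h := hadd x (-x)
  rw [add_neg_cancel, aux_zero A hadd] at h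
  exact eq_neg_of_add_eq_zero_right h.symm

private lemma aux_sub (A : H → K) (hadd : ∀ x y, A (x + y) = A x + A y) (x y : H) :
    A (x - y) = A x - A y := by
  have h := hadd (x - y) y
  rw [sub_add_cancel] at h
  exact eq_sub_of_add_eq h.symm

private lemma aux_rat (A : H → K) (hadd : ∀ x y, A (x + y) = A x + A y) (q : ℚ) (x : H) :
    A ((q : ℂ) • x) = (q : ℂ) • A x :=
  map_ratCast_smul (AddMonoidHom.mk' A hadd) ℂ ℂ q x

/-- equal norms + orthogonal implies equal image norms -/
private lemma aux_ns (A : H → K)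
    (hadd : ∀ x y, A (x + y) = A x + A y)
    (hop : ∀ x y : H, ⟪x, y⟫ = 0 → ⟪A x, A y⟫ = 0)
    {x y : H} (hxy : ⟪x, y⟫ = 0) (hn : ‖x‖ = ‖y‖) : ‖A x‖ = ‖A y‖ := by
  have hyx : ⟪y, x⟫ = 0 := inner_eq_zero_symm.mp hxy
  have h1 : ⟪x + y, x - y⟫ = 0 := by
    rw [inner_sub_right, inner_add_left, inner_add_left, hxy, hyx,
      inner_self_C, inner_self_C, hn]
    ring
  have h2 := hop _ _ h1
  rw [hadd, aux_sub A hadd, inner_sub_right, inner_add_left, inner_add_left,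
    hop x y hxy, hop y x hyx, inner_self_C, inner_self_C] at h2
  have h4 : (‖A x‖ : ℝ) ^ 2 = ‖A y‖ ^ 2 := by
    have h3 : ((‖A x‖ : ℂ)) ^ 2 = (‖A y‖ : ℂ) ^ 2 := by linear_combination h2
    exact_mod_cast h3
  nlinarith [norm_nonneg (A x), norm_nonneg (A y)]

/-- existence of an orthogonal vector of the same norm -/
private lemma aux_orth_exists (hdim : 2 ≤ Module.rank ℂ H) (x : H) :
    ∃ f : H, ⟪x, f⟫ = 0 ∧ ‖f‖ = ‖x‖ := by
  by_cases hx : x = 0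
  · exact ⟨0, by simp [hx]⟩
  obtain ⟨v, hv⟩ : ∃ v : H, v ∉ Submodule.span ℂ {x} := by
    by_contra hc
    push_neg at hc
    have htop : (Submodule.span ℂ ({x} : Set H)) = ⊤ := by
      exact Submodule.eq_top_iff'.mpr hc
    have h1 : Module.rank ℂ H ≤ 1 := by
      have := rank_span_le (R := ℂ) ({x} : Set H)
      rw [htop, rank_top] at this
      simpa using this
    have := hdim.trans h1
    norm_num at this
  set c : ℂ := ⟪x, v⟫ / ((‖x‖ : ℂ) ^ 2) with hc
  set f₀ : H := v - c • x with hf₀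
  have hnx : ((‖x‖ : ℂ) ^ 2) ≠ 0 := by simp [hx]
  have hperp : ⟪x, f₀⟫ = 0 := by
    rw [hf₀, inner_sub_right, inner_smul_right, inner_self_C, hc]
    rw [div_mul_cancel₀ _ hnx, sub_self]
  have hf0 : f₀ ≠ 0 := by
    intro h
    apply hv
    rw [Submodule.mem_span_singleton]
    exact ⟨c, by rw [sub_eq_zero] at h; exact h.symm⟩
  refine ⟨((‖x‖ / ‖f₀‖ : ℝ) : ℂ) • f₀, ?_, ?_⟩
  · rw [inner_smul_right, hperp, mul_zero]
  · rw [norm_smul]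
    simp only [Complex.norm_real, Real.norm_eq_abs]
    rw [abs_of_nonneg (by positivity), div_mul_eq_mul_div, mul_div_assoc,
      div_self (norm_ne_zero_iff.mpr hf0), mul_one]


section WithHyps
variable (A : H → K)
    (hadd : ∀ x y, A (x + y) = A x + A y)
    (hop : ∀ x y : H, ⟪x, y⟫ = 0 → ⟪A x, A y⟫ = 0)
include hadd hop

private lemma aux_pyth (u v : H) (huv : ⟪u, v⟫ = 0) :
    ‖A (u + v)‖ ^ 2 = ‖A u‖ ^ 2 + ‖A v‖ ^ 2 := by
  rw [hadd, norm_add_sq (𝕜 := ℂ), hop u v huv]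
  simp

private lemma aux_low (hdim : 2 ≤ Module.rank ℂ H) (x : H) (s : ℝ) (hs : 0 < s) :
    s ^ 2 * ‖A x‖ ^ 2 ≤ ‖A ((s : ℂ) • x)‖ ^ 2 := by
  obtain ⟨f, hf1, hf2⟩ := aux_orth_exists hdim x
  have hf1' : ⟪f, x⟫ = 0 := inner_eq_zero_symm.mp hf1
  have key : ∀ q : ℚ, 0 < (q : ℝ) → (q : ℝ) < s →
      (q : ℝ) ^ 2 * ‖A x‖ ^ 2 ≤ ‖A ((s : ℂ) • x)‖ ^ 2 := by
    intro q hq hqs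
    set a : ℝ := (q : ℝ) with ha
    set b : ℝ := Real.sqrt (a * (s - a)) with hbdef
    have hb2 : b ^ 2 = a * (s - a) := Real.sq_sqrt (by nlinarith)
    have hb2c : ((b : ℝ) : ℂ) ^ 2 = (a : ℂ) * ((s : ℂ) - (a : ℂ)) := by
      have := congrArg (Complex.ofReal) hb2
      push_cast at this
      exact this
    set u : H := (a : ℂ) • x + (b : ℂ) • f with hu
    set v : H := ((s - a : ℝ) : ℂ) • x - (b : ℂ) • f with hv
    have huv : u + v = (s : ℂ) • x := by
      have hsc : (a : ℂ) + ((s - a : ℝ) : ℂ) = (s : ℂ) := by push_cast; ring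
      rw [hu, hv, ← hsc, add_smul]
      abel
    have horth : ⟪u, v⟫ = 0 := by
      simp only [hu, hv, inner_sub_right, inner_add_left, inner_smul_left, inner_smul_right,
        hf1, hf1', inner_self_C x, inner_self_C f, hf2, Complex.conj_ofReal,
        mul_zero, zero_mul, add_zero, zero_add, sub_zero]
      push_cast
      linear_combination (-((‖x‖ : ℂ) ^ 2)) * hb2c
    have hsum : ‖A ((s : ℂ) • x)‖ ^ 2 = ‖A u‖ ^ 2 + ‖A v‖ ^ 2 := by
      rw [← huv]; exact aux_pyth A hadd hop u v horth
    have hax : ⟪(a : ℂ) • x, (b : ℂ) • f⟫ = 0 := by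
      rw [inner_smul_left, inner_smul_right, hf1]; ring
    have hu2 : ‖A u‖ ^ 2 = ‖A ((a : ℂ) • x)‖ ^ 2 + ‖A ((b : ℂ) • f)‖ ^ 2 :=
      aux_pyth A hadd hop _ _ hax
    have hqa : ‖A ((a : ℂ) • x)‖ = a * ‖A x‖ := by
      have hcast : ((a : ℝ) : ℂ) = (q : ℂ) := by rw [ha]; norm_cast
      rw [hcast, aux_rat A hadd q x, norm_smul, ← hcast]
      rw [Complex.norm_real, Real.norm_eq_abs, abs_of_pos hq]
    have hqa2 : ‖A ((a : ℂ) • x)‖ ^ 2 = a ^ 2 * ‖A x‖ ^ 2 := by rw [hqa]; ring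
    nlinarith [sq_nonneg (‖A v‖), sq_nonneg (‖A ((b:ℂ) • f)‖), hsum, hu2, hqa2]
  by_contra hcon
  push_neg at hcon
  have hAx : 0 < ‖A x‖ := by
    rcases (norm_nonneg (A x)).lt_or_eq with h | h
    · exact h
    · exfalso; rw [← h] at hcon; simp at hcon
      nlinarith [sq_nonneg (‖A ((s:ℂ) • x)‖), hcon]
  set cc : ℝ := ‖A ((s : ℂ) • x)‖ / ‖A x‖ with hcc
  have hcc0 : 0 ≤ cc := by positivity
  have hccx : cc * ‖A x‖ = ‖A ((s : ℂ) • x)‖ := by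
    rw [hcc, div_mul_cancel₀ _ hAx.ne']
  have hNlt : ‖A ((s : ℂ) • x)‖ < s * ‖A x‖ := by
    apply lt_of_pow_lt_pow_left₀ 2 (by positivity)
    rw [mul_pow]
    exact hcon
  have hccs : cc < s := (div_lt_iff₀ hAx).mpr hNlt
  obtain ⟨q, hq1, hq2⟩ := exists_rat_btwn hccs
  have hq0 : 0 < (q : ℝ) := lt_of_le_of_lt hcc0 hq1
  have hk := key q hq0 hq2
  have hlt : ‖A ((s : ℂ) • x)‖ < (q : ℝ) * ‖A x‖ := by
    rw [← hccx]
    exact mul_lt_mul_of_pos_right hq1 hAx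
  have hsq : ‖A ((s : ℂ) • x)‖ ^ 2 < ((q : ℝ) * ‖A x‖) ^ 2 :=
    pow_lt_pow_left₀ hlt (norm_nonneg _) two_ne_zero
  rw [mul_pow] at hsq
  linarith
 
private lemma aux_scale (hdim : 2 ≤ Module.rank ℂ H) (s : ℝ) (x : H) :
    ‖A ((s : ℂ) • x)‖ = |s| * ‖A x‖ := by
  have hpos : ∀ t : ℝ, 0 < t → ∀ y : H, ‖A ((t : ℂ) • y)‖ = t * ‖A y‖ := by
    intro t ht y
    have h1 := aux_low A hadd hop hdim y t ht
    have h2 := aux_low A hadd hop hdim ((t : ℂ) • y) t⁻¹ (by positivity)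
    have h3 : ((t⁻¹ : ℝ) : ℂ) • ((t : ℂ) • y) = y := by
      rw [smul_smul]
      norm_cast
      rw [inv_mul_cancel₀ (ne_of_gt ht)]
      simp
    rw [h3] at h2
    have h2' : ‖A ((t : ℂ) • y)‖ ^ 2 ≤ t ^ 2 * ‖A y‖ ^ 2 := by
      have h := mul_le_mul_of_nonneg_left h2 (sq_nonneg t)
      have he : t ^ 2 * (t⁻¹ ^ 2 * ‖A ((t : ℂ) • y)‖ ^ 2) = ‖A ((t : ℂ) • y)‖ ^ 2 := by
        field_simp
      rw [he] at h
      exact h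
    nlinarith [norm_nonneg (A ((t : ℂ) • y)), norm_nonneg (A y), h1, h2',
      mul_nonneg ht.le (norm_nonneg (A y)),
      sq_nonneg (‖A ((t : ℂ) • y)‖ - t * ‖A y‖), sq_nonneg (‖A ((t : ℂ) • y)‖ + t * ‖A y‖)]
  rcases lt_trichotomy s 0 with h | h | h
  · have hns : (s : ℂ) • x = -(((-s : ℝ) : ℂ) • x) := by
      push_cast; rw [← neg_smul]; ring_nf
    rw [hns, aux_neg A hadd, norm_neg, hpos (-s) (by linarith) x, abs_of_neg h]
  · simp [h, aux_zero A hadd]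
  · rw [hpos s h x, abs_of_pos h]

private lemma aux_Rlin (hdim : 2 ≤ Module.rank ℂ H) (s : ℝ) (x : H) :
    A ((s : ℂ) • x) = (s : ℂ) • A x := by
  have key : ∀ q : ℚ, ‖A ((s : ℂ) • x) - (s : ℂ) • A x‖ ≤ 2 * |s - (q : ℝ)| * ‖A x‖ := by
    intro q
    have hsplit : A ((s : ℂ) • x) - (s : ℂ) • A x
        = A (((s - (q : ℝ) : ℝ) : ℂ) • x) + (((q : ℝ) - s : ℝ) : ℂ) • A x := by
      have h1 : ((s : ℂ) • x) - ((q : ℂ) • x) = (((s - (q : ℝ) : ℝ)) : ℂ) • x := by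
        rw [← sub_smul]; norm_cast
      have h2 : A (((s - (q : ℝ) : ℝ) : ℂ) • x) = A ((s : ℂ) • x) - (q : ℂ) • A x := by
        rw [← h1, aux_sub A hadd, aux_rat A hadd]
      rw [h2]
      push_cast
      rw [sub_smul]
      abel
    rw [hsplit]
    have hb1 : ‖A (((s - (q : ℝ) : ℝ) : ℂ) • x)‖ = |s - (q : ℝ)| * ‖A x‖ :=
      aux_scale A hadd hop hdim _ x
    calc ‖A (((s - (q : ℝ) : ℝ) : ℂ) • x) + (((q : ℝ) - s : ℝ) : ℂ) • A x‖
        ≤ ‖A (((s - (q : ℝ) : ℝ) : ℂ) • x)‖ + ‖(((q : ℝ) - s : ℝ) : ℂ) • A x‖ :=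
          norm_add_le _ _
      _ ≤ 2 * |s - (q : ℝ)| * ‖A x‖ := by
          rw [hb1, norm_smul]
          simp only [Complex.norm_real, Real.norm_eq_abs]
          rw [abs_sub_comm ((q : ℝ)) s]
          nlinarith [abs_nonneg (s - (q:ℝ)), norm_nonneg (A x)]
  have hle : ‖A ((s : ℂ) • x) - (s : ℂ) • A x‖ ≤ 0 := by
    apply le_of_forall_pos_le_add
    intro ε hε
    have hδ : 0 < ε / (2 * ‖A x‖ + 1) := by positivity
    obtain ⟨q, hq1, hq2⟩ := exists_rat_btwn (sub_lt_self s hδ)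
    have habs : |s - (q : ℝ)| < ε / (2 * ‖A x‖ + 1) := by
      rw [abs_lt]; constructor <;> nlinarith
    have := key q
    have hfin : 2 * |s - (q : ℝ)| * ‖A x‖ < ε := by
      have h2 : 2 * ‖A x‖ + 1 > 0 := by positivity
      rw [lt_div_iff₀ h2] at habs
      nlinarith [abs_nonneg (s - (q:ℝ)), norm_nonneg (A x)]
    linarith
  exact sub_eq_zero.mp (norm_le_zero_iff.mp hle)


/-- decomposition of a complex scalar action -/
private lemma aux_Al (hdim : 2 ≤ Module.rank ℂ H) (l : ℂ) (x : H) :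
    A (l • x) = ((l.re : ℝ) : ℂ) • A x + ((l.im : ℝ) : ℂ) • A (Complex.I • x) := by
  have hx : l • x = ((l.re : ℝ) : ℂ) • x + ((l.im : ℝ) : ℂ) • (Complex.I • x) := by
    rw [smul_smul, ← add_smul]
    norm_num [Complex.re_add_im]
  rw [hx, hadd, aux_Rlin A hadd hop hdim, aux_Rlin A hadd hop hdim]

private lemma aux_normI (hdim : 2 ≤ Module.rank ℂ H) (x : H) : ‖A (Complex.I • x)‖ = ‖A x‖ := by
  obtain ⟨f, hf1, hf2⟩ := aux_orth_exists hdim x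
  have h1 : ‖A (Complex.I • x)‖ = ‖A f‖ := by
    apply aux_ns A hadd hop
    · rw [inner_smul_left, hf1, mul_zero]
    · rw [norm_smul, Complex.norm_I, one_mul, hf2]
  have h2 : ‖A x‖ = ‖A f‖ := aux_ns A hadd hop hf1 hf2.symm
  rw [h1, h2]

private lemma aux_c_orth {x f : H} (hxf : ⟪x, f⟫ = 0) (hn : ‖f‖ = ‖x‖) :
    ⟪A x, A (Complex.I • x)⟫ = ⟪A f, A (Complex.I • f)⟫ := by
  have hfx : ⟪f, x⟫ = 0 := inner_eq_zero_symm.mp hxf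
  have h0 : ⟪x + f, Complex.I • x - Complex.I • f⟫ = 0 := by
    rw [inner_sub_right, inner_add_left, inner_add_left, inner_smul_right, inner_smul_right,
      inner_smul_right, inner_smul_right, hxf, hfx, inner_self_C x, inner_self_C f, hn]
    ring
  have h := hop _ _ h0
  rw [hadd, aux_sub A hadd, inner_sub_right, inner_add_left, inner_add_left,
    hop x (Complex.I • f) (by rw [inner_smul_right, hxf, mul_zero]),
    hop f (Complex.I • x) (by rw [inner_smul_right, hfx, mul_zero])] at h
  linear_combination h

private lemma aux_c_anti {x f : H} (hxf : ⟪x, f⟫ = 0) (hn : ‖f‖ = ‖x‖) :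
    ⟪A x, A (Complex.I • x)⟫ = - (starRingEnd ℂ) ⟪A f, A (Complex.I • f)⟫ := by
  have hfx : ⟪f, x⟫ = 0 := inner_eq_zero_symm.mp hxf
  have h0 : ⟪x + Complex.I • f, Complex.I • x + f⟫ = 0 := by
    rw [inner_add_right, inner_add_left, inner_add_left, inner_smul_right, inner_smul_left,
      inner_smul_left, inner_smul_right, hxf, hfx, inner_self_C x, inner_self_C f, hn]
    simp [Complex.conj_I]
  have h := hop _ _ h0
  rw [hadd, hadd, inner_add_right, inner_add_left, inner_add_left,
    hop x f hxf,
    hop (Complex.I • f) (Complex.I • x)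
      (by rw [inner_smul_right, inner_smul_left, hfx]; ring),
    ← inner_conj_symm (A (Complex.I • f)) (A f)] at h
  linear_combination h

private lemma aux_c_conj (hdim : 2 ≤ Module.rank ℂ H) (x : H) :
    (starRingEnd ℂ) ⟪A x, A (Complex.I • x)⟫ = - ⟪A x, A (Complex.I • x)⟫ := by
  obtain ⟨f, hf1, hf2⟩ := aux_orth_exists hdim x
  have h1 := aux_c_orth A hadd hop hf1 hf2
  have h2 := aux_c_anti A hadd hop hf1 hf2
  have h3 := congrArg (starRingEnd ℂ) h1
  linear_combination h3 + h2

private lemma aux_csmul (hdim : 2 ≤ Module.rank ℂ H) (l : ℂ) (x : H) :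
    ⟪A (l • x), A (Complex.I • (l • x))⟫
      = ((Complex.normSq l : ℝ) : ℂ) * ⟪A x, A (Complex.I • x)⟫ := by
  have hI : Complex.I • (l • x) = (l * Complex.I) • x := by
    rw [smul_smul, mul_comm]
  have hconj := aux_c_conj A hadd hop hdim x
  have hnormI := aux_normI A hadd hop hdim x
  have hcb : ⟪A (Complex.I • x), A x⟫ = -⟪A x, A (Complex.I • x)⟫ := by
    rw [← inner_conj_symm (A (Complex.I • x)) (A x)]
    exact hconj
  have hMN : ⟪A (Complex.I • x), A (Complex.I • x)⟫ = ⟪A x, A x⟫ := by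
    rw [inner_self_C (A (Complex.I • x)), inner_self_C (A x), hnormI]
  rw [hI, aux_Al A hadd hop hdim l x, aux_Al A hadd hop hdim (l * Complex.I) x, Complex.mul_I_re, Complex.mul_I_im]
  simp only [inner_add_left, inner_add_right, inner_smul_left, inner_smul_right,
    Complex.conj_ofReal]
  simp only [hcb, hMN]
  push_cast [Complex.normSq_apply]
  ring

private lemma aux_gsmul (hdim : 2 ≤ Module.rank ℂ H) (l : ℂ) (x : H) :
    ‖A (l • x)‖ ^ 2 = Complex.normSq l * ‖A x‖ ^ 2 := by
  have hconj := aux_c_conj A hadd hop hdim x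
  have hre : (⟪A x, A (Complex.I • x)⟫).re = 0 := by
    have := congrArg Complex.re hconj
    simp only [Complex.conj_re, Complex.neg_re] at this
    linarith
  have hnormI := aux_normI A hadd hop hdim x
  rw [aux_Al A hadd hop hdim, norm_add_sq (𝕜 := ℂ)]
  rw [inner_smul_left, inner_smul_right, Complex.conj_ofReal]
  rw [norm_smul, norm_smul]
  simp only [Complex.norm_real, Real.norm_eq_abs, RCLike.re_to_complex]
  rw [hnormI]
  have hre2 : ((((l.re : ℝ)) : ℂ) * (((l.im : ℝ) : ℂ) * ⟪A x, A (Complex.I • x)⟫)).re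
      = l.re * l.im * (⟪A x, A (Complex.I • x)⟫).re := by
    simp [Complex.mul_re, Complex.mul_im]
    ring
  rw [hre2, hre, Complex.normSq_apply]
  rw [mul_pow, mul_pow, _root_.sq_abs l.re, _root_.sq_abs l.im]
  ring


private lemma aux_c_const (hdim : 2 ≤ Module.rank ℂ H) (u x₀ : H) (hu : ‖u‖ = 1) (hx₀ : ‖x₀‖ = 1) :
    ⟪A u, A (Complex.I • u)⟫ = ⟪A x₀, A (Complex.I • x₀)⟫ := by
  set α : ℂ := ⟪x₀, u⟫ with hα
  set z : H := u - α • x₀ with hzdef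
  have hx₀x₀ : ⟪x₀, x₀⟫ = 1 := by rw [inner_self_C x₀, hx₀]; norm_num
  have hz : ⟪x₀, z⟫ = 0 := by
    rw [hzdef, inner_sub_right, inner_smul_right, hx₀x₀, mul_one, hα, sub_self]
  by_cases hz0 : z = 0
  · have huz : u = α • x₀ := by
      have := hz0
      rw [hzdef, sub_eq_zero] at this
      exact this
    have hns : Complex.normSq α = 1 := by
      have h1 : ‖u‖ = ‖α‖ * ‖x₀‖ := by rw [huz, norm_smul]
      rw [hu, hx₀, mul_one] at h1
      rw [Complex.normSq_eq_norm_sq, ← h1]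
      norm_num
    rw [huz, aux_csmul A hadd hop hdim α x₀, hns]
    norm_num
  · have hzn : ‖z‖ ≠ 0 := norm_ne_zero_iff.mpr hz0
    set zu : H := ((‖z‖⁻¹ : ℝ) : ℂ) • z with hzu
    set β : ℂ := ((‖z‖ : ℝ) : ℂ) with hβ
    have hzu_norm : ‖zu‖ = 1 := by
      rw [hzu, norm_smul, Complex.norm_real, Real.norm_eq_abs, abs_of_pos
        (by positivity : (0:ℝ) < ‖z‖⁻¹)]
      field_simp
    have hzu_perp : ⟪x₀, zu⟫ = 0 := by
      rw [hzu, inner_smul_right, hz, mul_zero]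
    have hzu_perp' : ⟪zu, x₀⟫ = 0 := inner_eq_zero_symm.mp hzu_perp
    have hβzu : β • zu = z := by
      rw [hzu, hβ, smul_smul, ← Complex.ofReal_mul, mul_inv_cancel₀ hzn,
        Complex.ofReal_one, one_smul]
    have hu_eq : u = α • x₀ + β • zu := by
      rw [hβzu, hzdef]
      abel
    have hczu : ⟪A zu, A (Complex.I • zu)⟫ = ⟪A x₀, A (Complex.I • x₀)⟫ := by
      exact (aux_c_orth A hadd hop hzu_perp (by rw [hzu_norm, hx₀])).symm
    have hpyth : Complex.normSq α + ‖z‖ ^ 2 = 1 := by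
      have h1 : ‖u‖ ^ 2 = ‖α • x₀ + z‖ ^ 2 := by conv_lhs => rw [hu_eq, hβzu]
      rw [norm_add_sq (𝕜 := ℂ), inner_smul_left, hz, mul_zero] at h1
      rw [hu, norm_smul, hx₀, mul_one] at h1
      have hna : ‖α‖ ^ 2 = Complex.normSq α := by
        rw [Complex.normSq_eq_norm_sq]
      rw [← hna]
      simp at h1
      linarith [h1]
    -- expand c u
    have hAu : A u = A (α • x₀) + A (β • zu) := by rw [hu_eq, hadd]
    have hAIu : A (Complex.I • u) = A (Complex.I • (α • x₀)) + A (Complex.I • (β • zu)) := by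
      rw [hu_eq, smul_add, hadd]
    have hz' : ⟪z, x₀⟫ = 0 := inner_eq_zero_symm.mp hz
    have hcross1 : ⟪A (α • x₀), A (Complex.I • (β • zu))⟫ = 0 := by
      apply hop
      simp [inner_smul_left, inner_smul_right, hzu_perp, hz, hzu_perp', hz']
    have hcross2 : ⟪A (β • zu), A (Complex.I • (α • x₀))⟫ = 0 := by
      apply hop
      simp [inner_smul_left, inner_smul_right, hzu_perp, hz, hzu_perp', hz']
    rw [hAu, hAIu, inner_add_left, inner_add_right, inner_add_right,
      hcross1, hcross2, aux_csmul A hadd hop hdim α x₀, aux_csmul A hadd hop hdim β zu, hczu]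
    have hnsβ : Complex.normSq β = ‖z‖ ^ 2 := by
      rw [hβ, Complex.normSq_ofReal]; ring
    rw [hnsβ]
    have := congrArg (Complex.ofReal) hpyth
    push_cast at this ⊢
    linear_combination ⟪A x₀, A (Complex.I • x₀)⟫ * this

private lemma aux_g_const (hdim : 2 ≤ Module.rank ℂ H) (u x₀ : H) (hu : ‖u‖ = 1) (hx₀ : ‖x₀‖ = 1) :
    ‖A u‖ ^ 2 = ‖A x₀‖ ^ 2 := by
  set α : ℂ := ⟪x₀, u⟫ with hα
  set z : H := u - α • x₀ with hzdef
  have hx₀x₀ : ⟪x₀, x₀⟫ = 1 := by rw [inner_self_C x₀, hx₀]; norm_num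
  have hz : ⟪x₀, z⟫ = 0 := by
    rw [hzdef, inner_sub_right, inner_smul_right, hx₀x₀, mul_one, hα, sub_self]
  by_cases hz0 : z = 0
  · have huz : u = α • x₀ := by
      have := hz0
      rw [hzdef, sub_eq_zero] at this
      exact this
    have hns : Complex.normSq α = 1 := by
      have h1 : ‖u‖ = ‖α‖ * ‖x₀‖ := by rw [huz, norm_smul]
      rw [hu, hx₀, mul_one] at h1
      rw [Complex.normSq_eq_norm_sq, ← h1]
      norm_num
    rw [huz, aux_gsmul A hadd hop hdim α x₀, hns, one_mul]
  · have hzn : ‖z‖ ≠ 0 := norm_ne_zero_iff.mpr hz0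
    set zu : H := ((‖z‖⁻¹ : ℝ) : ℂ) • z with hzu
    set β : ℂ := ((‖z‖ : ℝ) : ℂ) with hβ
    have hzu_norm : ‖zu‖ = 1 := by
      rw [hzu, norm_smul, Complex.norm_real, Real.norm_eq_abs, abs_of_pos
        (by positivity : (0:ℝ) < ‖z‖⁻¹)]
      field_simp
    have hzu_perp : ⟪x₀, zu⟫ = 0 := by
      rw [hzu, inner_smul_right, hz, mul_zero]
    have hβzu : β • zu = z := by
      rw [hzu, hβ, smul_smul, ← Complex.ofReal_mul, mul_inv_cancel₀ hzn,
        Complex.ofReal_one, one_smul]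
    have hu_eq : u = α • x₀ + β • zu := by
      rw [hβzu, hzdef]
      abel
    have hpyth : Complex.normSq α + ‖z‖ ^ 2 = 1 := by
      have h1 : ‖u‖ ^ 2 = ‖α • x₀ + z‖ ^ 2 := by conv_lhs => rw [hu_eq, hβzu]
      rw [norm_add_sq (𝕜 := ℂ), inner_smul_left, hz, mul_zero] at h1
      rw [hu, norm_smul, hx₀, mul_one] at h1
      have hna : ‖α‖ ^ 2 = Complex.normSq α := by
        rw [Complex.normSq_eq_norm_sq]
      rw [← hna]
      simp at h1
      linarith [h1]
    have hAu : A u = A (α • x₀) + A (β • zu) := by rw [hu_eq, hadd]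
    have hz' : ⟪z, x₀⟫ = 0 := inner_eq_zero_symm.mp hz
    have hzu_perp' : ⟪zu, x₀⟫ = 0 := inner_eq_zero_symm.mp hzu_perp
    have hcross : ⟪A (α • x₀), A (β • zu)⟫ = 0 := by
      apply hop
      simp [inner_smul_left, inner_smul_right, hzu_perp, hz, hzu_perp', hz']
    have hAzu : ‖A zu‖ = ‖A x₀‖ :=
      (aux_ns A hadd hop hzu_perp (by rw [hzu_norm, hx₀])).symm
    have h2 : ‖A u‖ ^ 2 = ‖A (α • x₀)‖ ^ 2 + ‖A (β • zu)‖ ^ 2 := by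
      rw [hAu, norm_add_sq (𝕜 := ℂ), hcross]
      simp
    rw [h2, aux_gsmul A hadd hop hdim α x₀, aux_gsmul A hadd hop hdim β zu, hAzu]
    have hnsβ : Complex.normSq β = ‖z‖ ^ 2 := by
      rw [hβ, Complex.normSq_ofReal]; ring
    rw [hnsβ]
    nlinarith [hpyth]


end WithHyps
end AuxLemmas

/-- For a non-zero additive orthogonality preserving map `A` between complex inner
product spaces (`dim H ≥ 2`), the following are equivalent: (a) `A` is neither
complex-linear nor conjugate-linear; (b) `i A(x) ∉ A(H)` for some non-zero `x`;
(c) `i A(x) ∉ A(H)` for every non-zero `x`. -/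
theorem characterization_not_complexLinear_additive_op
    {H K : Type*} [NormedAddCommGroup H] [InnerProductSpace ℂ H]
    [NormedAddCommGroup K] [InnerProductSpace ℂ K]
    (hdim : 2 ≤ Module.rank ℂ H)
    (A : H → K) (hA : A ≠ 0)
    (hadd : ∀ x y, A (x + y) = A x + A y)
    (hop : ∀ x y : H, ⟪x, y⟫ = 0 → ⟪A x, A y⟫ = 0) :
    ((¬ (∀ (l : ℂ) (x : H), A (l • x) = l • A x) ∧
        ¬ (∀ (l : ℂ) (x : H), A (l • x) = (starRingEnd ℂ l) • A x)) ↔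
      (∃ x : H, x ≠ 0 ∧ Complex.I • A x ∉ Set.range A)) ∧
    ((∃ x : H, x ≠ 0 ∧ Complex.I • A x ∉ Set.range A) ↔
      (∀ x : H, x ≠ 0 → Complex.I • A x ∉ Set.range A)) := by
  classical
  -- a unit vector
  obtain ⟨v, hv⟩ : ∃ v : H, v ≠ 0 := by
    apply (rank_pos_iff_exists_ne_zero (R := ℂ) (M := H)).mp
    exact lt_of_lt_of_le (by norm_num) hdim
  have hvn : ‖v‖ ≠ 0 := norm_ne_zero_iff.mpr hv
  set x₀ : H := ((‖v‖⁻¹ : ℝ) : ℂ) • v with hx₀def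
  have hx₀norm : ‖x₀‖ = 1 := by
    rw [hx₀def, norm_smul, Complex.norm_real, Real.norm_eq_abs,
      abs_of_pos (by positivity : (0:ℝ) < ‖v‖⁻¹)]
    field_simp
  have hx₀ne : x₀ ≠ 0 := by
    intro h
    rw [h, norm_zero] at hx₀norm
    norm_num at hx₀norm
  set γ : ℝ := ‖A x₀‖ ^ 2 with hγdef
  set τ : ℝ := (⟪A x₀, A (Complex.I • x₀)⟫).im with hτdef
  -- c x₀ is purely imaginary
  have hreτ : ⟪A x₀, A (Complex.I • x₀)⟫ = ((τ : ℝ) : ℂ) * Complex.I := by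
    have h1 := aux_c_conj A hadd hop hdim x₀
    have h2 := congrArg Complex.re h1
    simp only [Complex.conj_re, Complex.neg_re] at h2
    have hre0 : (⟪A x₀, A (Complex.I • x₀)⟫).re = 0 := by linarith
    rw [← Complex.re_add_im (⟪A x₀, A (Complex.I • x₀)⟫), hre0, hτdef]
    simp
  -- norm formula
  have hγall : ∀ x : H, ‖A x‖ ^ 2 = γ * ‖x‖ ^ 2 := by
    intro x
    by_cases hx : x = 0
    · rw [hx, aux_zero A hadd]
      simp
    · have hxn : ‖x‖ ≠ 0 := norm_ne_zero_iff.mpr hx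
      set u : H := ((‖x‖⁻¹ : ℝ) : ℂ) • x with hudef
      have hun : ‖u‖ = 1 := by
        rw [hudef, norm_smul, Complex.norm_real, Real.norm_eq_abs,
          abs_of_pos (by positivity : (0:ℝ) < ‖x‖⁻¹)]
        field_simp
      have hxu : x = ((‖x‖ : ℝ) : ℂ) • u := by
        rw [hudef, smul_smul, ← Complex.ofReal_mul, mul_inv_cancel₀ hxn,
          Complex.ofReal_one, one_smul]
      calc ‖A x‖ ^ 2 = ‖A (((‖x‖ : ℝ) : ℂ) • u)‖ ^ 2 := by rw [← hxu]
        _ = Complex.normSq ((‖x‖ : ℝ) : ℂ) * ‖A u‖ ^ 2 := aux_gsmul A hadd hop hdim _ u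
        _ = γ * ‖x‖ ^ 2 := by
            rw [Complex.normSq_ofReal, aux_g_const A hadd hop hdim u x₀ hun hx₀norm, ← hγdef]
            ring
  -- c formula
  have hcall : ∀ x : H, ⟪A x, A (Complex.I • x)⟫ = ((τ * ‖x‖ ^ 2 : ℝ) : ℂ) * Complex.I := by
    intro x
    by_cases hx : x = 0
    · rw [hx, aux_zero A hadd]
      simp
    · have hxn : ‖x‖ ≠ 0 := norm_ne_zero_iff.mpr hx
      set u : H := ((‖x‖⁻¹ : ℝ) : ℂ) • x with hudef
      have hun : ‖u‖ = 1 := by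
        rw [hudef, norm_smul, Complex.norm_real, Real.norm_eq_abs,
          abs_of_pos (by positivity : (0:ℝ) < ‖x‖⁻¹)]
        field_simp
      have hxu : x = ((‖x‖ : ℝ) : ℂ) • u := by
        rw [hudef, smul_smul, ← Complex.ofReal_mul, mul_inv_cancel₀ hxn,
          Complex.ofReal_one, one_smul]
      calc ⟪A x, A (Complex.I • x)⟫
          = ⟪A (((‖x‖ : ℝ) : ℂ) • u), A (Complex.I • (((‖x‖ : ℝ) : ℂ) • u))⟫ := by rw [← hxu]
        _ = ((Complex.normSq ((‖x‖ : ℝ) : ℂ) : ℝ) : ℂ) * ⟪A u, A (Complex.I • u)⟫ :=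
            aux_csmul A hadd hop hdim _ u
        _ = ((τ * ‖x‖ ^ 2 : ℝ) : ℂ) * Complex.I := by
            rw [aux_c_const A hadd hop hdim u x₀ hun hx₀norm, hreτ, Complex.normSq_ofReal]
            push_cast
            ring
  -- positivity of γ
  have hγ0 : 0 ≤ γ := by positivity
  have hγpos : 0 < γ := by
    rcases hγ0.lt_or_eq with h | h
    · exact h
    · exfalso
      apply hA
      funext x
      have h2 : ‖A x‖ ^ 2 = 0 := by rw [hγall x, ← h, zero_mul]
      have h3 : ‖A x‖ = 0 := by
        have := pow_eq_zero_iff (n := 2) (by norm_num) |>.mp h2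
        exact this
      simpa using norm_eq_zero.mp h3
  -- |τ| ≤ γ
  have hτle : |τ| ≤ γ := by
    have h1 := norm_inner_le_norm (𝕜 := ℂ) (A x₀) (A (Complex.I • x₀))
    rw [hreτ, aux_normI A hadd hop hdim x₀] at h1
    rw [norm_mul, Complex.norm_I, mul_one, Complex.norm_real, Real.norm_eq_abs] at h1
    calc |τ| ≤ ‖A x₀‖ * ‖A x₀‖ := h1
      _ = γ := by rw [hγdef]; ring
  -- the B formula
  have hBform : ∀ u w : H, ⟪A u, A w⟫
      = ((γ * (⟪u, w⟫).re : ℝ) : ℂ) + ((τ * (⟪u, w⟫).im : ℝ) : ℂ) * Complex.I := by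
    intro u w
    by_cases hu : u = 0
    · rw [hu, aux_zero A hadd]
      simp
    · have hun : (((‖u‖ : ℝ) : ℂ) ^ 2) ≠ 0 := by
        simp [norm_ne_zero_iff.mpr hu]
      set l : ℂ := ⟪u, w⟫ / (((‖u‖ : ℝ) : ℂ) ^ 2) with hldef
      set w₀ : H := w - l • u with hw₀def
      have hperp : ⟪u, w₀⟫ = 0 := by
        rw [hw₀def, inner_sub_right, inner_smul_right, inner_self_C u, hldef]
        rw [div_mul_cancel₀ _ hun, sub_self]
      have hw_eq : w = l • u + w₀ := by rw [hw₀def]; abel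
      have hiuw : ⟪u, w⟫ = l * (((‖u‖ : ℝ) : ℂ) ^ 2) := by
        rw [hldef, div_mul_cancel₀ _ hun]
      have hAuAw : ⟪A u, A w⟫ = ⟪A u, A (l • u)⟫ := by
        rw [hw_eq, hadd, inner_add_right, hop u w₀ hperp, add_zero]
      rw [hAuAw, aux_Al A hadd hop hdim l u, inner_add_right, inner_smul_right, inner_smul_right,
        inner_self_C (A u), hcall u]
      have hAu2 : ((‖A u‖ : ℝ) : ℂ) ^ 2 = ((γ * ‖u‖ ^ 2 : ℝ) : ℂ) := by
        rw [← Complex.ofReal_pow, hγall u]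
      rw [hAu2]
      have hcast2 : (((‖u‖ : ℝ) : ℂ) ^ 2) = (((‖u‖ ^ 2 : ℝ)) : ℂ) := by push_cast; ring
      have hre : (⟪u, w⟫).re = l.re * ‖u‖ ^ 2 := by
        rw [hiuw, hcast2]
        simp only [Complex.mul_re, Complex.ofReal_re, Complex.ofReal_im]
        ring
      have him : (⟪u, w⟫).im = l.im * ‖u‖ ^ 2 := by
        rw [hiuw, hcast2]
        simp only [Complex.mul_im, Complex.ofReal_re, Complex.ofReal_im]
        ring
      rw [hre, him]
      push_cast
      ring
  -- case analysis
  rcases (lt_or_eq_of_le hτle) with hlt | heq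
  · -- exotic case : neither linear nor antilinear, and (c) holds
    have hPc : ∀ x : H, x ≠ 0 → Complex.I • A x ∉ Set.range A := by
      intro x hx hmem
      obtain ⟨y, hy⟩ := hmem
      have hqu : ∀ u : H, γ * (⟪u, y⟫).re = -(τ * (⟪u, x⟫).im)
          ∧ τ * (⟪u, y⟫).im = γ * (⟪u, x⟫).re := by
        intro u
        have h1 : ⟪A u, A y⟫ = Complex.I * ⟪A u, A x⟫ := by
          rw [hy, inner_smul_right]
        rw [hBform u y, hBform u x] at h1
        rw [Complex.ext_iff] at h1
        obtain ⟨h2, h3⟩ := h1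
        simp only [Complex.add_re, Complex.add_im, Complex.mul_re, Complex.mul_im,
          Complex.I_re, Complex.I_im, Complex.ofReal_re, Complex.ofReal_im] at h2 h3
        constructor
        · linarith
        · linarith
      -- first vector identity
      have hw1 : ((γ : ℝ) : ℂ) • y = ((τ : ℝ) : ℂ) • (Complex.I • x) := by
        set w : H := ((γ : ℝ) : ℂ) • y - ((τ : ℝ) : ℂ) • (Complex.I • x) with hwdef
        have hwre : ∀ u : H, (⟪u, w⟫).re = 0 := by
          intro u
          rw [hwdef, inner_sub_right, inner_smul_right, inner_smul_right, inner_smul_right]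
          simp only [Complex.sub_re, Complex.mul_re, Complex.ofReal_re, Complex.ofReal_im,
            Complex.I_re, Complex.I_im, Complex.mul_im]
          have := (hqu u).1
          ring_nf
          ring_nf at this
          linarith
        have hw0 : w = 0 := by
          have h := hwre w
          rw [inner_self_C w, ← Complex.ofReal_pow, Complex.ofReal_re] at h
          have h2 := pow_eq_zero_iff (n := 2) (by norm_num) |>.mp h
          exact norm_eq_zero.mp h2
        rw [hwdef] at hw0
        exact sub_eq_zero.mp hw0
      have hw2 : ((γ : ℝ) : ℂ) • x = -(((τ : ℝ) : ℂ) • (Complex.I • y)) := by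
        set w : H := ((γ : ℝ) : ℂ) • x + ((τ : ℝ) : ℂ) • (Complex.I • y) with hwdef
        have hwre : ∀ u : H, (⟪u, w⟫).re = 0 := by
          intro u
          rw [hwdef, inner_add_right, inner_smul_right, inner_smul_right, inner_smul_right]
          simp only [Complex.add_re, Complex.mul_re, Complex.ofReal_re, Complex.ofReal_im,
            Complex.I_re, Complex.I_im, Complex.mul_im]
          have := (hqu u).2
          ring_nf
          ring_nf at this
          linarith
        have hw0 : w = 0 := by
          have h := hwre w
          rw [inner_self_C w, ← Complex.ofReal_pow, Complex.ofReal_re] at h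
          have h2 := pow_eq_zero_iff (n := 2) (by norm_num) |>.mp h
          exact norm_eq_zero.mp h2
        rw [hwdef] at hw0
        exact eq_neg_of_add_eq_zero_left hw0
      -- combine
      have hII : Complex.I • (Complex.I • x) = -x := by
        rw [smul_smul, Complex.I_mul_I, neg_one_smul]
      have hw1' : ((γ : ℝ) : ℂ) • (Complex.I • y) = -(((τ : ℝ) : ℂ) • x) := by
        calc ((γ : ℝ) : ℂ) • (Complex.I • y) = Complex.I • (((γ : ℝ) : ℂ) • y) :=
              (smul_comm _ _ _).symm
          _ = Complex.I • (((τ : ℝ) : ℂ) • (Complex.I • x)) := by rw [hw1]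
          _ = ((τ : ℝ) : ℂ) • (Complex.I • (Complex.I • x)) := smul_comm _ _ _
          _ = -(((τ : ℝ) : ℂ) • x) := by rw [hII, smul_neg]
      have hw2' : ((τ : ℝ) : ℂ) • (Complex.I • y) = -(((γ : ℝ) : ℂ) • x) := by
        rw [hw2, neg_neg]
      have e1 : (((τ * γ : ℝ)) : ℂ) • (Complex.I • y) = -((((τ * τ : ℝ)) : ℂ) • x) := by
        push_cast
        rw [mul_smul, hw1', smul_neg, mul_smul]
      have e2 : (((τ * γ : ℝ)) : ℂ) • (Complex.I • y) = -((((γ * γ : ℝ)) : ℂ) • x) := by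
        push_cast
        rw [mul_comm ((τ:ℝ):ℂ) ((γ:ℝ):ℂ), mul_smul, hw2', smul_neg, mul_smul]
      have e3 : ((((τ * τ : ℝ)) : ℂ)) • x = (((γ * γ : ℝ)) : ℂ) • x :=
        neg_inj.mp (e1.symm.trans e2)
      have e4 : (((γ * γ - τ * τ : ℝ)) : ℂ) • x = 0 := by
        push_cast
        push_cast at e3
        rw [sub_smul, ← e3, sub_self]
      have hsc : (((γ * γ - τ * τ : ℝ)) : ℂ) ≠ 0 := by
        simp only [ne_eq, Complex.ofReal_eq_zero]
        have h1 : τ * τ < γ * γ := by nlinarith [abs_nonneg τ, le_abs_self τ, neg_abs_le τ]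
        nlinarith
      exact hx ((smul_eq_zero.mp e4).resolve_left hsc)
    have hPb : ∃ x : H, x ≠ 0 ∧ Complex.I • A x ∉ Set.range A :=
      ⟨x₀, hx₀ne, hPc x₀ hx₀ne⟩
    constructor
    · constructor
      · intro _
        exact hPb
      · intro _
        constructor
        · intro hLin
          exact hPc x₀ hx₀ne ⟨Complex.I • x₀, hLin Complex.I x₀⟩
        · intro hConj
          apply hPc x₀ hx₀ne
          refine ⟨(-Complex.I) • x₀, ?_⟩
          rw [hConj (-Complex.I) x₀]
          simp
    · constructor
      · intro _
        exact hPc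
      · intro _
        exact hPb
  · -- |τ| = γ : linear or antilinear case
    have habs := (abs_eq hγ0).mp heq
    have hIlaw : (∀ x : H, A (Complex.I • x) = Complex.I • A x) ∨
        (∀ x : H, A (Complex.I • x) = -(Complex.I • A x)) := by
      rcases habs with hτγ | hτγ
      · left
        intro x
        have h1 : ‖A (Complex.I • x) - Complex.I • A x‖ ^ 2 = 0 := by
          rw [norm_sub_sq (𝕜 := ℂ), inner_smul_right]
          have hc2 : ⟪A (Complex.I • x), A x⟫
              = (starRingEnd ℂ) ⟪A x, A (Complex.I • x)⟫ := (inner_conj_symm _ _).symm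
          rw [hc2, hcall x]
          have hg1 : ‖A (Complex.I • x)‖ ^ 2 = γ * ‖x‖ ^ 2 := by
            rw [aux_normI A hadd hop hdim x, hγall x]
          rw [hg1, norm_smul, Complex.norm_I, one_mul, hγall x]
          simp only [map_mul, Complex.conj_ofReal, Complex.conj_I, RCLike.re_to_complex,
            mul_pow]
          simp [Complex.mul_re, hτγ]
          rw [← Complex.ofReal_pow, Complex.ofReal_re]
          ring
        have h2 : A (Complex.I • x) - Complex.I • A x = 0 := by
          have h3 := pow_eq_zero_iff (n := 2) (by norm_num) |>.mp h1
          exact norm_eq_zero.mp h3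
        exact sub_eq_zero.mp h2
      · right
        intro x
        have h1 : ‖A (Complex.I • x) + Complex.I • A x‖ ^ 2 = 0 := by
          rw [norm_add_sq (𝕜 := ℂ), inner_smul_right]
          have hc2 : ⟪A (Complex.I • x), A x⟫
              = (starRingEnd ℂ) ⟪A x, A (Complex.I • x)⟫ := (inner_conj_symm _ _).symm
          rw [hc2, hcall x]
          have hg1 : ‖A (Complex.I • x)‖ ^ 2 = γ * ‖x‖ ^ 2 := by
            rw [aux_normI A hadd hop hdim x, hγall x]
          rw [hg1, norm_smul, Complex.norm_I, one_mul, hγall x]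
          simp only [map_mul, Complex.conj_ofReal, Complex.conj_I, RCLike.re_to_complex,
            mul_pow]
          simp [Complex.mul_re, hτγ]
          rw [← Complex.ofReal_pow, Complex.ofReal_re]
          ring
        have h2 : A (Complex.I • x) + Complex.I • A x = 0 := by
          have h3 := pow_eq_zero_iff (n := 2) (by norm_num) |>.mp h1
          exact norm_eq_zero.mp h3
        exact eq_neg_of_add_eq_zero_left h2
    rcases hIlaw with hIlin | hIconj
    · -- linear
      have hLin : ∀ (l : ℂ) (x : H), A (l • x) = l • A x := by
        intro l x
        rw [aux_Al A hadd hop hdim l x, hIlin x]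
        conv_rhs => rw [← Complex.re_add_im l]
        rw [add_smul, mul_smul]
      have hnotb : ¬ (∃ x : H, x ≠ 0 ∧ Complex.I • A x ∉ Set.range A) := by
        rintro ⟨x, hx, hmem⟩
        exact hmem ⟨Complex.I • x, hLin Complex.I x⟩
      have hnota : ¬ ((¬ (∀ (l : ℂ) (x : H), A (l • x) = l • A x)) ∧
          ¬ (∀ (l : ℂ) (x : H), A (l • x) = (starRingEnd ℂ l) • A x)) :=
        fun h => h.1 hLin
      have hnotc : ¬ (∀ x : H, x ≠ 0 → Complex.I • A x ∉ Set.range A) :=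
        fun h => (h x₀ hx₀ne) ⟨Complex.I • x₀, hLin Complex.I x₀⟩
      exact ⟨iff_of_false hnota hnotb, iff_of_false hnotb hnotc⟩
    · -- antilinear
      have hConj : ∀ (l : ℂ) (x : H), A (l • x) = (starRingEnd ℂ l) • A x := by
        intro l x
        rw [aux_Al A hadd hop hdim l x, hIconj x]
        have hcl : (starRingEnd ℂ) l = ((l.re : ℝ) : ℂ) - ((l.im : ℝ) : ℂ) * Complex.I := by
          apply Complex.ext <;> simp
        rw [hcl, sub_smul, mul_smul, smul_neg, sub_eq_add_neg]
      have hIr : ∀ x : H, Complex.I • A x = A ((-Complex.I) • x) := by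
        intro x
        rw [hConj (-Complex.I) x]
        simp
      have hnotb : ¬ (∃ x : H, x ≠ 0 ∧ Complex.I • A x ∉ Set.range A) := by
        rintro ⟨x, hx, hmem⟩
        exact hmem ⟨(-Complex.I) • x, (hIr x).symm⟩
      have hnota : ¬ ((¬ (∀ (l : ℂ) (x : H), A (l • x) = l • A x)) ∧
          ¬ (∀ (l : ℂ) (x : H), A (l • x) = (starRingEnd ℂ l) • A x)) :=
        fun h => h.2 hConj
      have hnotc : ¬ (∀ x : H, x ≠ 0 → Complex.I • A x ∉ Set.range A) :=
        fun h => (h x₀ hx₀ne) ⟨(-Complex.I) • x₀, (hIr x₀).symm⟩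
      exact ⟨iff_of_false hnota hnotb, iff_of_false hnotb hnotc⟩
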